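/- For every integer n ≥ 2, the fraction 1/n is the value of the word L^{n−1} in the Farey binary tree, and the reduced degree sequence of the Haros graph G_{1/n} consists of exactly one entry equal to 2, exactly n − 2 entries equal to 3, and one entry equal to n + 2 (the boundary degree). Consequently S(1/n) = −(2/n)·ln(1/n) − (1 − 2/n)·ln(1 − 2/n) and H(1/n) = 0. -/

import Mathlib

/-- Symbols for paths in the Farey binary tree. -/
inductive LR
  | L
  | R
deriving DecidableEq

/-- One step in the Farey binary tree: update the current pair of fractions
(represented as pairs (numerator, denominator) of naturals). -/
def fareyStep : ((ℕ × ℕ) × (ℕ × ℕ)) → LR → ((ℕ × ℕ) × (ℕ × ℕ))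
  | ((a, b), (c, d)), LR.L => ((a, b), (a + c, b + d))
  | ((a, b), (c, d)), LR.R => ((a + c, b + d), (c, d))

/-- The final pair of fractions of a word: after reading the first symbol `L`
the current pair is (0/1, 1/1); the remaining symbols update it. -/
def finalPair (w : List LR) : (ℕ × ℕ) × (ℕ × ℕ) :=
  w.tail.foldl fareyStep ((0, 1), (1, 1))

/-- The value ⟨w⟩ of a word: the mediant of its final pair, as (numerator, denominator). -/
def value (w : List LR) : ℕ × ℕ :=
  ((finalPair w).1.1 + (finalPair w).2.1, (finalPair w).1.2 + (finalPair w).2.2)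

/-- A word over {L,R} is a Farey word when its first symbol is `L`. -/
def IsFareyWord (w : List LR) : Prop := w.head? = some LR.L

/-- Concatenation of degree sequences:
[a₁,…,a_s] ⊕ [b₁,…,b_t] = [a₁+1, a₂, …, a_{s−1}, a_s+b₁, b₂, …, b_{t−1}, b_t+1]. -/
def oplus (A B : List ℕ) : List ℕ :=
  (A.dropLast.modifyHead (· + 1)) ++ [A.getLastD 0 + B.headD 0] ++ B.tail.dropLast
    ++ [B.getLastD 0 + 1]

/-- Update of the pair (D(left ancestor), D(right ancestor)) of unreduced degree
sequences along one symbol. -/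
def degStep : (List ℕ × List ℕ) → LR → (List ℕ × List ℕ)
  | (A, B), LR.L => (A, oplus A B)
  | (A, B), LR.R => (oplus A B, B)

/-- The pair (D(a/b), D(c/d)) of unreduced degree sequences of the final pair of a word;
0/1 and 1/1 are both assigned the list [1,1]. -/
def degPair (w : List LR) : List ℕ × List ℕ :=
  w.tail.foldl degStep ([1, 1], [1, 1])

/-- The unreduced degree sequence D(⟨w⟩) = D(a/b) ⊕ D(c/d) of the value of a word. -/
def Dseq (w : List LR) : List ℕ :=
  oplus (degPair w).1 (degPair w).2

/-- Reduction: [k₁,…,k_{q+1}] becomes [k₂,…,k_q, k₁+k_{q+1}]; the last entry is the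
boundary degree and the remaining ones are the inner degrees. -/
def reduce (D : List ℕ) : List ℕ :=
  D.tail.dropLast ++ [D.headD 0 + D.getLastD 0]

/-- The reduced degree sequence of the Haros graph G_{⟨w⟩}. -/
def degSeq (w : List LR) : List ℕ := reduce (Dseq w)

/-- Degree-distribution entropy S of the Haros graph G_{⟨w⟩}:
S = −Σ_k P(k)·ln P(k), summed over the degree values occurring in the reduced
degree sequence, where P(k) = m(k)/q. -/
noncomputable def Sent (w : List LR) : ℝ :=
  -∑ k ∈ (degSeq w).toFinset,
    (((degSeq w).count k : ℝ) / ((value w).2 : ℝ)) *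
      Real.log (((degSeq w).count k : ℝ) / ((value w).2 : ℝ))

/-- Reduced entropy H of the Haros graph G_{⟨w⟩} (with the convention 0·ln 0 = 0,
automatic since Real.log 0 = 0). -/
noncomputable def Hent (w : List LR) : ℝ :=
  let x : ℝ := ((value w).1 : ℝ) / ((value w).2 : ℝ)
  if x ≤ 1 / 2 then
    Sent w + 2 * x * Real.log x + (1 - 2 * x) * Real.log (1 - 2 * x)
  else
    Sent w + 2 * (1 - x) * Real.log (1 - x) + (2 * x - 1) * Real.log (2 * x - 1)

lemma oplus_calc (k : ℕ) : oplus [1,1] (2 :: (List.replicate k 3 ++ [2, k+2]))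
    = 2 :: (List.replicate (k+1) 3 ++ [2, k+3]) := by
  simp [oplus, List.getLastD, List.dropLast_append_of_ne_nil, List.replicate_succ]

lemma foldl_deg (k : ℕ) : List.foldl degStep ([1,1],[1,1]) (List.replicate (k+1) LR.L)
    = ([1,1], 2 :: (List.replicate k 3 ++ [2, k+2])) := by
  induction k with
  | zero => decide
  | succ k ih =>
      rw [List.replicate_succ' (n := k+1), List.foldl_append, ih]
      simpa [degStep] using oplus_calc k

lemma foldl_farey (k : ℕ) : List.foldl fareyStep ((0,1),(1,1)) (List.replicate k LR.L)
    = ((0,1),(1, k+1)) := by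
  induction k with
  | zero => rfl
  | succ k ih => rw [List.replicate_succ', List.foldl_append, ih]; simp [fareyStep]; omega

lemma tail_repl (m : ℕ) : (List.replicate (m+1) LR.L).tail = List.replicate m LR.L := by
  simp [List.replicate_succ]

lemma value_repl (n : ℕ) (hn : 2 ≤ n) : value (List.replicate (n-1) LR.L) = (1, n) := by
  obtain ⟨m, rfl⟩ : ∃ m, n = m + 2 := ⟨n - 2, by omega⟩
  show value (List.replicate (m+1) LR.L) = _
  unfold value finalPair
  rw [tail_repl, foldl_farey]; simp; omega

lemma degSeq_repl (m : ℕ) : degSeq (List.replicate (m+1) LR.L)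
    = List.replicate m 3 ++ [2, m+4] := by
  cases m with
  | zero => decide
  | succ k =>
      unfold degSeq Dseq degPair
      rw [tail_repl, foldl_deg]
      show reduce (oplus [1,1] (2 :: (List.replicate k 3 ++ [2, k+2]))) = _
      rw [oplus_calc]
      simp [reduce, List.getLastD, List.dropLast_append_of_ne_nil, List.replicate_succ,
        List.dropLast_cons_of_ne_nil]
      omega

lemma Sent_repl (n : ℕ) (hn : 2 ≤ n) :
    Sent (List.replicate (n-1) LR.L)
      = -(2 / (n : ℝ)) * Real.log (1 / (n : ℝ))
        - (1 - 2 / (n : ℝ)) * Real.log (1 - 2 / (n : ℝ)) := by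
  obtain ⟨m, rfl⟩ : ∃ m, n = m + 2 := ⟨n - 2, by omega⟩
  unfold Sent
  rw [value_repl _ hn]
  rw [show (m+2) - 1 = m + 1 from rfl, degSeq_repl]
  cases m with
  | zero =>
      have htf : (List.replicate 0 3 ++ [2, 0+4]).toFinset = insert 2 {4} := by decide
      have c2 : (List.replicate 0 3 ++ [2, 0+4]).count 2 = 1 := by decide
      have c4 : (List.replicate 0 3 ++ [2, 0+4]).count 4 = 1 := by decide
      rw [htf, Finset.sum_insert (by decide), Finset.sum_singleton, c2, c4]
      norm_num
      ring
  | succ k =>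
      have htf : (List.replicate (k+1) 3 ++ [2, k+1+4]).toFinset
          = insert 2 (insert 3 {k+5}) := by
        ext x
        simp
        constructor <;> intro h <;> omega
      rw [htf]
      have c3 : (List.replicate (k+1) 3 ++ [2, k+1+4]).count 3 = k+1 := by
        simp [List.count_replicate, List.count_cons]
      have c2 : (List.replicate (k+1) 3 ++ [2, k+1+4]).count 2 = 1 := by
        simp [List.count_replicate, List.count_cons]
      have c5 : (List.replicate (k+1) 3 ++ [2, k+1+4]).count (k+5) = 1 := by
        simp [List.count_replicate, List.count_cons]
      rw [Finset.sum_insert (by simp only [Finset.mem_insert, Finset.mem_singleton]; omega),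
        Finset.sum_insert (by simp only [Finset.mem_singleton]; omega),
        Finset.sum_singleton, c2, c3, c5]
      have hne : ((k:ℝ)+1+2) ≠ 0 := by positivity
      have h1 : ((k+1:ℕ):ℝ)/(((k+1)+2:ℕ):ℝ) = 1 - 2/(((k+1)+2:ℕ):ℝ) := by
        push_cast
        field_simp
        ring
      push_cast at h1 ⊢
      rw [h1]
      ring

lemma degSeq_repl' (n : ℕ) (hn : 2 ≤ n) :
    degSeq (List.replicate (n-1) LR.L) = List.replicate (n-2) 3 ++ [2, n+2] := by
  obtain ⟨m, rfl⟩ : ∃ m, n = m + 2 := ⟨n - 2, by omega⟩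
  show degSeq (List.replicate (m+1) LR.L) = _
  rw [degSeq_repl]
  congr 3

lemma Hent_repl (n : ℕ) (hn : 2 ≤ n) : Hent (List.replicate (n-1) LR.L) = 0 := by
  have hn0 : (0:ℝ) < (n:ℝ) := by positivity
  have hx : ((value (List.replicate (n-1) LR.L)).1 : ℝ) /
      ((value (List.replicate (n-1) LR.L)).2 : ℝ) = 1 / (n:ℝ) := by
    rw [value_repl _ hn]
    simp
  have hle : (1:ℝ)/(n:ℝ) ≤ 1/2 := by
    apply div_le_div_of_nonneg_left (by norm_num) (by norm_num)
    exact_mod_cast hn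
  unfold Hent
  rw [hx, if_pos hle, Sent_repl _ hn]
  have h2 : 2 * ((1:ℝ)/(n:ℝ)) = 2/(n:ℝ) := by ring
  rw [h2]
  ring

/-- for n ≥ 2 the word L^{n−1} has value 1/n, and the reduced degree
sequence of G_{1/n} consists of exactly one entry 2, exactly n − 2 entries 3 and one
entry n + 2 (the boundary degree); consequently
S(1/n) = −(2/n)·ln(1/n) − (1 − 2/n)·ln(1 − 2/n) and H(1/n) = 0. -/
theorem statement15 (n : ℕ) (hn : 2 ≤ n) :
    value (List.replicate (n - 1) LR.L) = (1, n) ∧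
    (degSeq (List.replicate (n - 1) LR.L)).length = n ∧
    (degSeq (List.replicate (n - 1) LR.L)).count 2 = 1 ∧
    (degSeq (List.replicate (n - 1) LR.L)).count 3 = n - 2 ∧
    (degSeq (List.replicate (n - 1) LR.L)).count (n + 2) = 1 ∧
    Sent (List.replicate (n - 1) LR.L)
      = -(2 / (n : ℝ)) * Real.log (1 / (n : ℝ))
        - (1 - 2 / (n : ℝ)) * Real.log (1 - 2 / (n : ℝ)) ∧
    Hent (List.replicate (n - 1) LR.L) = 0 := by
  refine ⟨value_repl n hn, ?_, ?_, ?_, ?_, Sent_repl n hn, Hent_repl n hn⟩ <;>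
    rw [degSeq_repl' n hn]
  · simp; omega
  · simp [List.count_replicate, List.count_cons]
    omega
  · simp [List.count_replicate, List.count_cons]
    omega
  · rw [List.count_append, List.count_replicate]
    simp [List.count_cons]
    split_ifs <;> omega
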